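/- Skorokhod-type obstacle problem, existence via the running maximum: define η_t := max_{0≤v≤t} L_v for t ∈ {0,...,N-1}, and define Y_t := E_t[Σ_{u=t}^{N-1} η_u + X_N] for t ∈ {0,...,N-1} and Y_N := X_N. Then η is adapted, square-integrable and nondecreasing, Y is adapted and square-integrable, Y_t ≥ X_t a.s. for every t ∈ {0,...,N}, and a.s. Y_t = X_t holds at every point of increase of η, i.e., a.s., for every t ∈ {0,...,N-1} with η_t > η_{t-1} (with the convention η_{-1} = -∞, so t = 0 is always a point of increase) one has Y_t = X_t, and Y_N = X_N. -/

import Mathlib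

open MeasureTheory Filter

/-- Running maximum `max_{t ≤ v ≤ u} L v ω` (intended for `t ≤ u`). -/
noncomputable def runMax {Ω : Type*} (L : ℕ → Ω → ℝ) (t u : ℕ) (ω : Ω) : ℝ :=
  (Finset.Icc t u).fold max (L t ω) fun v => L v ω

/-- Running minimum `min_{t ≤ v ≤ u} K v ω` (intended for `t ≤ u`). -/
noncomputable def runMin {Ω : Type*} (K : ℕ → Ω → ℝ) (t u : ℕ) (ω : Ω) : ℝ :=
  (Finset.Icc t u).fold min (K t ω) fun v => K v ω

section RunMaxLemmas

variable {Ω : Type*} (L : ℕ → Ω → ℝ)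

lemma runMax_self (t : ℕ) (ω : Ω) : runMax L t t ω = L t ω := by
  simp [runMax]

lemma runMax_succ {t u : ℕ} (h : t ≤ u + 1) (ω : Ω) :
    runMax L t (u + 1) ω = max (L (u + 1) ω) (runMax L t u ω) := by
  unfold runMax
  rw [show Finset.Icc t (u+1) = insert (u+1) (Finset.Icc t u) by
        ext x; simp [Finset.mem_Icc, Finset.mem_insert]; omega,
      Finset.fold_insert (by simp)]

lemma runMax_mono_right {t : ℕ} (ω : Ω) : ∀ {s u : ℕ}, s ≤ u →
    runMax L t s ω ≤ runMax L t u ω := by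
  intro s u hsu
  induction u with
  | zero => obtain rfl : s = 0 := Nat.le_zero.mp hsu; exact le_rfl
  | succ u ih =>
    rcases Nat.eq_or_lt_of_le hsu with rfl | hlt
    · exact le_refl _
    · rcases le_or_gt t (u+1) with ht | ht
      · exact le_trans (ih (by omega)) (by rw [runMax_succ L ht]; exact le_max_right _ _)
      · unfold runMax
        rw [Finset.Icc_eq_empty (by omega), Finset.Icc_eq_empty (by omega)]

lemma le_runMax {t v u : ℕ} (htv : t ≤ v) (hvu : v ≤ u) (ω : Ω) :
    L v ω ≤ runMax L t u ω := by
  refine le_trans ?_ (runMax_mono_right L ω hvu)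
  match v, htv with
  | 0, h => obtain rfl : t = 0 := Nat.le_zero.mp h; rw [runMax_self]
  | w+1, h =>
    rcases Nat.eq_or_lt_of_le h with rfl | hlt
    · rw [runMax_self]
    · rw [runMax_succ L h]; exact le_max_left _ _

lemma runMax_split {a b : ℕ} (hab : a ≤ b) (ω : Ω) : ∀ {u : ℕ}, b + 1 ≤ u →
    runMax L a u ω = max (runMax L a b ω) (runMax L (b+1) u ω) := by
  intro u hu
  induction u, hu using Nat.le_induction with
  | base =>
    rw [runMax_succ L (by omega), runMax_self, max_comm]
  | succ u hu ih =>
    rw [runMax_succ L (by omega), runMax_succ L (by omega), ih, max_left_comm]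

end RunMaxLemmas

lemma memℒp_max {Ω : Type*} {m : MeasurableSpace Ω} {μ : Measure Ω} {f g : Ω → ℝ}
    (hf : MemLp f 2 μ) (hg : MemLp g 2 μ) :
    MemLp (fun ω => max (f ω) (g ω)) 2 μ := by
  refine MemLp.mono' (hf.norm.add hg.norm)
    ((hf.aestronglyMeasurable.aemeasurable.max
      hg.aestronglyMeasurable.aemeasurable).aestronglyMeasurable) ?_
  filter_upwards with ω
  simp only [Pi.add_apply, Real.norm_eq_abs]
  rcases le_total (f ω) (g ω) with h | h
  · rw [max_eq_right h]
    exact le_add_of_nonneg_left (abs_nonneg _)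
  · rw [max_eq_left h]
    exact le_add_of_nonneg_right (abs_nonneg _)

/-- A discrete-time nonlinear expectation on the horizon `{0, ..., N}`:
a family of maps `E t` sending square-integrable `F N`-measurable random
variables to square-integrable `F t`-measurable random variables, satisfying
monotonicity, strict monotonicity, translation invariance, the tower property,
the zero-one law and monotone convergence. -/
structure NLExp {Ω : Type*} {m0 : MeasurableSpace Ω} (μ : Measure Ω)
    (F : Filtration ℕ m0) (N : ℕ) where
  E : ℕ → (Ω → ℝ) → Ω → ℝ
  adapted : ∀ t, t ≤ N → ∀ ξ : Ω → ℝ, StronglyMeasurable[F N] ξ → MemLp ξ 2 μ →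
    StronglyMeasurable[F t] (E t ξ)
  sqInt : ∀ t, t ≤ N → ∀ ξ : Ω → ℝ, StronglyMeasurable[F N] ξ → MemLp ξ 2 μ →
    MemLp (E t ξ) 2 μ
  mono : ∀ t, t ≤ N → ∀ ξ η : Ω → ℝ, StronglyMeasurable[F N] ξ → MemLp ξ 2 μ →
    StronglyMeasurable[F N] η → MemLp η 2 μ → ξ ≤ᵐ[μ] η → E t ξ ≤ᵐ[μ] E t η
  strictMono : ∀ t, t ≤ N → ∀ ξ η : Ω → ℝ, StronglyMeasurable[F N] ξ → MemLp ξ 2 μ →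
    StronglyMeasurable[F N] η → MemLp η 2 μ → ξ ≤ᵐ[μ] η →
    0 < μ {ω | ξ ω < η ω} → 0 < μ {ω | E t ξ ω < E t η ω}
  translation : ∀ t, t ≤ N → ∀ ξ ζ : Ω → ℝ, StronglyMeasurable[F N] ξ → MemLp ξ 2 μ →
    StronglyMeasurable[F t] ζ → MemLp ζ 2 μ → E t (ξ + ζ) =ᵐ[μ] E t ξ + ζ
  tower : ∀ s t, s ≤ t → t ≤ N → ∀ ξ : Ω → ℝ, StronglyMeasurable[F N] ξ → MemLp ξ 2 μ →
    E s (E t ξ) =ᵐ[μ] E s ξ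
  zeroOne : ∀ t, t ≤ N → ∀ ξ η : Ω → ℝ, StronglyMeasurable[F N] ξ → MemLp ξ 2 μ →
    StronglyMeasurable[F N] η → MemLp η 2 μ → ∀ A : Set Ω, MeasurableSet[F t] A →
    E t (A.indicator ξ + Aᶜ.indicator η) =ᵐ[μ]
      A.indicator (E t ξ) + Aᶜ.indicator (E t η)
  monoConv : ∀ t, t ≤ N → ∀ (ξs : ℕ → Ω → ℝ) (ξ : Ω → ℝ),
    (∀ n, StronglyMeasurable[F N] (ξs n)) → (∀ n, MemLp (ξs n) 2 μ) →
    StronglyMeasurable[F N] ξ → MemLp ξ 2 μ →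
    (∀ᵐ ω ∂μ, (Monotone fun n => ξs n ω) ∨ (Antitone fun n => ξs n ω)) →
    (∀ᵐ ω ∂μ, Tendsto (fun n => ξs n ω) atTop (nhds (ξ ω))) →
    ∀ᵐ ω ∂μ, Tendsto (fun n => E t (ξs n) ω) atTop (nhds (E t ξ ω))

/-- **Skorokhod-type obstacle problem, existence via the running maximum.** With
`η_t := max_{0≤v≤t} L_v` and `Y_t := E t [∑_{u=t}^{N-1} η_u + X_N]` (`Y_N := X_N`),
the process `η` is adapted, square-integrable and nondecreasing, `Y` is adapted and
square-integrable, `Y` dominates `X`, and a.s. `Y_t = X_t` at every point of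
increase of `η` (with the convention `η_{-1} = -∞`, so `t = 0` is always a point of
increase) and at `t = N`. -/
theorem skorokhod_obstacle_existence
{Ω : Type*} [TopologicalSpace Ω] [PolishSpace Ω]
    [m0 : MeasurableSpace Ω] [BorelSpace Ω]
    (μ : Measure Ω) [IsProbabilityMeasure μ]
    (F : Filtration ℕ m0) (N : ℕ) (hN : 1 ≤ N)
    (EE : NLExp μ F N)
(X : ℕ → Ω → ℝ)
    (hX_adapted : ∀ t, t ≤ N → StronglyMeasurable[F t] (X t))
    (hX_sqInt : ∀ t, t ≤ N → MemLp (X t) 2 μ)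
(L : ℕ → Ω → ℝ)
    (hL_adapted : ∀ t, t < N → StronglyMeasurable[F t] (L t))
    (hL_sqInt : ∀ t, t < N →
      MemLp (fun ω => ∑ u ∈ Finset.Ico t N, runMax L t u ω) 2 μ)
    (hL_rep : ∀ t, t < N →
      X t =ᵐ[μ] EE.E t fun ω => (∑ u ∈ Finset.Ico t N, runMax L t u ω) + X N ω)
(Y : ℕ → Ω → ℝ)
    (hY_def : ∀ t, t < N →
      Y t = EE.E t fun ω => (∑ u ∈ Finset.Ico t N, runMax L 0 u ω) + X N ω)
    (hY_N : Y N = X N) :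
    (∀ t, t < N → StronglyMeasurable[F t] fun ω => runMax L 0 t ω) ∧
    (∀ t, t < N → MemLp (fun ω => runMax L 0 t ω) 2 μ) ∧
    (∀ ω, ∀ s t, s ≤ t → t < N → runMax L 0 s ω ≤ runMax L 0 t ω) ∧
    (∀ t, t ≤ N → StronglyMeasurable[F t] (Y t)) ∧
    (∀ t, t ≤ N → MemLp (Y t) 2 μ) ∧
    (∀ t, t ≤ N → X t ≤ᵐ[μ] Y t) ∧
    (∀ᵐ ω ∂μ, ∀ t, t < N →
      (t = 0 ∨ runMax L 0 (t - 1) ω < runMax L 0 t ω) → Y t ω = X t ω) ∧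
    Y N = X N := by
  -- measurability of running maxima
  have hrm_meas : ∀ t u, t ≤ u → u < N →
      StronglyMeasurable[F u] fun ω => runMax L t u ω := by
    intro t u htu huN
    induction u with
    | zero =>
      obtain rfl : t = 0 := Nat.le_zero.mp htu
      simpa only [runMax_self] using hL_adapted 0 huN
    | succ u ih =>
      have h1 : (fun ω => runMax L t (u+1) ω)
          = fun ω => max (L (u+1) ω) (runMax L t u ω) :=
        funext fun ω => runMax_succ L htu ω
      rw [h1]
      rcases Nat.eq_or_lt_of_le htu with rfl | hlt
      · have h2 : (fun ω => max (L (u+1) ω) (runMax L (u+1) u ω))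
            = fun ω => max (L (u+1) ω) (L (u+1) ω) := by
          funext ω; unfold runMax; rw [Finset.Icc_eq_empty (by omega)]; rfl
        rw [h2]
        exact ((hL_adapted (u+1) huN).measurable.max
          (hL_adapted (u+1) huN).measurable).stronglyMeasurable
      · exact ((hL_adapted (u+1) huN).measurable.max
          (((ih (by omega) (by omega)).mono (F.mono (by omega))).measurable)).stronglyMeasurable
  -- splitting at the bottom
  have hsplit : ∀ t u ω, t + 1 ≤ u →
      runMax L t u ω = max (L t ω) (runMax L (t+1) u ω) := by
    intro t u ω hu
    rw [runMax_split L le_rfl ω hu, runMax_self]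
  -- square integrability of running maxima, by downward induction
  have hLp : ∀ d t, t < N → N - 1 - t = d → ∀ u, t ≤ u → u < N →
      MemLp (fun ω => runMax L t u ω) 2 μ := by
    intro d
    induction d with
    | zero =>
      intro t htN hd u htu huN
      obtain rfl : u = t := by omega
      have h := hL_sqInt u htN
      have he : (fun ω => ∑ v ∈ Finset.Ico u N, runMax L u v ω)
          = fun ω => runMax L u u ω := by
        funext ω
        rw [show Finset.Ico u N = {u} by ext x; simp [Finset.mem_Ico]; omega,
          Finset.sum_singleton]
      rwa [he] at h
    | succ d ih =>
      intro t htN hd u htu huN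
      have ht1 : t + 1 < N := by omega
      have ihT : ∀ u, t + 1 ≤ u → u < N → MemLp (fun ω => runMax L (t+1) u ω) 2 μ :=
        ih (t+1) ht1 (by omega)
      have hSt := hL_sqInt t htN
      have hSt1 := hL_sqInt (t+1) ht1
      set U : Ω → ℝ := fun ω => (∑ u ∈ Finset.Ico t N, runMax L t u ω)
        - (∑ u ∈ Finset.Ico (t+1) N, runMax L (t+1) u ω) with hU
      have hU_mem : MemLp U 2 μ := hSt.sub hSt1
      have hsum : ∀ ω, (∑ u ∈ Finset.Ico t N, runMax L t u ω)
          = L t ω + ∑ u ∈ Finset.Ico (t+1) N, runMax L t u ω := by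
        intro ω
        rw [Finset.sum_eq_sum_Ico_succ_bot htN, runMax_self]
      have hle : ∀ ω, L t ω ≤ U ω := by
        intro ω
        have h1 : ∀ u ∈ Finset.Ico (t+1) N, runMax L (t+1) u ω ≤ runMax L t u ω := by
          intro u hu
          rw [hsplit t u ω (Finset.mem_Ico.mp hu).1]
          exact le_max_right _ _
        have h2 := Finset.sum_le_sum h1
        have h3 := hsum ω
        simp only [hU]
        linarith
      set Lo : Ω → ℝ := fun ω => (∑ u ∈ Finset.Ico t N, runMax L t u ω)
        - (∑ u ∈ Finset.Ico (t+1) N, max (U ω) (runMax L (t+1) u ω)) with hLo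
      have hge : ∀ ω, Lo ω ≤ L t ω := by
        intro ω
        have h1 : ∀ u ∈ Finset.Ico (t+1) N,
            runMax L t u ω ≤ max (U ω) (runMax L (t+1) u ω) := by
          intro u hu
          rw [hsplit t u ω (Finset.mem_Ico.mp hu).1]
          exact max_le_max (hle ω) le_rfl
        have h2 := Finset.sum_le_sum h1
        have h3 := hsum ω
        simp only [hLo]
        linarith
      have hLo_mem : MemLp Lo 2 μ := by
        refine hSt.sub (memLp_finset_sum _ fun u hu => ?_)
        exact memℒp_max hU_mem (ihT u (Finset.mem_Ico.mp hu).1 (Finset.mem_Ico.mp hu).2)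
      have hLt_mem : MemLp (L t) 2 μ := by
        refine MemLp.mono' (hU_mem.norm.add hLo_mem.norm)
          ((hL_adapted t htN).mono (F.le t)).aestronglyMeasurable ?_
        filter_upwards with ω
        simp only [Pi.add_apply, Real.norm_eq_abs, abs_le]
        constructor
        · have := hge ω
          have h4 := neg_abs_le (Lo ω)
          have h5 := abs_nonneg (U ω)
          linarith
        · have := hle ω
          have h4 := le_abs_self (U ω)
          have h5 := abs_nonneg (Lo ω)
          linarith
      rcases Nat.eq_or_lt_of_le htu with rfl | hlt
      · have he : (fun ω => runMax L t t ω) = L t := funext fun ω => runMax_self L t ω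
        rwa [he]
      · have he : (fun ω => runMax L t u ω)
            = fun ω => max (L t ω) (runMax L (t+1) u ω) :=
          funext fun ω => hsplit t u ω hlt
        rw [he]
        exact memℒp_max hLt_mem (ihT u hlt huN)
  have hLp' : ∀ t u, t ≤ u → u < N → MemLp (fun ω => runMax L t u ω) 2 μ :=
    fun t u htu huN => hLp (N - 1 - t) t (by omega) rfl u htu huN
  -- the two integrands
  set ξ : ℕ → Ω → ℝ :=
    fun t ω => (∑ u ∈ Finset.Ico t N, runMax L 0 u ω) + X N ω with hξ
  set ξ' : ℕ → Ω → ℝ :=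
    fun t ω => (∑ u ∈ Finset.Ico t N, runMax L t u ω) + X N ω with hξ'
  have hξ_meas : ∀ t, StronglyMeasurable[F N] (ξ t) := by
    intro t
    refine Measurable.stronglyMeasurable ?_
    refine Measurable.add (Finset.measurable_sum _ fun u hu => ?_)
      (hX_adapted N le_rfl).measurable
    have huN := (Finset.mem_Ico.mp hu).2
    exact ((hrm_meas 0 u (Nat.zero_le u) huN).mono (F.mono huN.le)).measurable
  have hξ'_meas : ∀ t, t < N → StronglyMeasurable[F N] (ξ' t) := by
    intro t htN
    refine Measurable.stronglyMeasurable ?_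
    refine Measurable.add (Finset.measurable_sum _ fun u hu => ?_)
      (hX_adapted N le_rfl).measurable
    obtain ⟨htu, huN⟩ := Finset.mem_Ico.mp hu
    exact ((hrm_meas t u htu huN).mono (F.mono huN.le)).measurable
  have hξ_mem : ∀ t, MemLp (ξ t) 2 μ := by
    intro t
    exact (memLp_finset_sum _ fun u hu =>
      hLp' 0 u (Nat.zero_le u) (Finset.mem_Ico.mp hu).2).add (hX_sqInt N le_rfl)
  have hξ'_mem : ∀ t, t < N → MemLp (ξ' t) 2 μ := by
    intro t htN
    exact (hL_sqInt t htN).add (hX_sqInt N le_rfl)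
  -- comparison of integrands
  have hrm_le : ∀ t u ω, t ≤ u → runMax L t u ω ≤ runMax L 0 u ω := by
    intro t u ω htu
    rcases Nat.eq_zero_or_pos t with rfl | ht
    · exact le_rfl
    · have h := runMax_split L (a := 0) (b := t-1) (Nat.zero_le _) ω
        (u := u) (by omega)
      rw [show t - 1 + 1 = t by omega] at h
      rw [h]
      exact le_max_right _ _
  -- domination
  have hdom : ∀ t, t ≤ N → X t ≤ᵐ[μ] Y t := by
    intro t htN
    rcases Nat.eq_or_lt_of_le htN with rfl | hlt
    · rw [hY_N]
    · rw [hY_def t hlt]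
      refine (hL_rep t hlt).trans_le ?_
      refine EE.mono t htN _ _ (hξ'_meas t hlt) (hξ'_mem t hlt)
        (hξ_meas t) (hξ_mem t) ?_
      filter_upwards with ω
      have : ∀ u ∈ Finset.Ico t N, runMax L t u ω ≤ runMax L 0 u ω :=
        fun u hu => hrm_le t u ω (Finset.mem_Ico.mp hu).1
      have h2 := Finset.sum_le_sum this
      exact add_le_add_left h2 _
  -- the flat-off condition
  have hae : ∀ t : ℕ, ∀ᵐ ω ∂μ, t < N →
      (t = 0 ∨ runMax L 0 (t - 1) ω < runMax L 0 t ω) → Y t ω = X t ω := by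
    intro t
    by_cases htN : t < N
    swap
    · filter_upwards with ω h; exact absurd h htN
    rcases Nat.eq_zero_or_pos t with rfl | ht
    · have hY0 : Y 0 =ᵐ[μ] X 0 := by
        rw [hY_def 0 htN]
        exact (hL_rep 0 htN).symm
      filter_upwards [hY0] with ω h _ _
      exact h
    · -- t ≥ 1
      set A : Set Ω := {ω | runMax L 0 (t-1) ω < L t ω} with hA
      have hA_meas : MeasurableSet[F t] A := by
        apply measurableSet_lt
        · exact ((hrm_meas 0 (t-1) (Nat.zero_le _) (by omega)).mono
            (F.mono (by omega))).measurable
        · exact (hL_adapted t htN).measurable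
      have hAeq : ∀ ω ∈ A, ξ t ω = ξ' t ω := by
        intro ω hω
        simp only [hξ, hξ']
        refine congrArg (· + X N ω) ?_
        refine Finset.sum_congr rfl fun u hu => ?_
        obtain ⟨htu, huN⟩ := Finset.mem_Ico.mp hu
        have h := runMax_split L (a := 0) (b := t-1) (Nat.zero_le _) ω
          (u := u) (by omega)
        rw [show t - 1 + 1 = t by omega] at h
        rw [h, max_eq_right]
        exact le_of_lt (lt_of_lt_of_le hω (le_runMax L le_rfl htu ω))
      have hkey : (A.indicator (ξ t) + Aᶜ.indicator (ξ' t)) = ξ' t := by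
        funext ω
        by_cases hω : ω ∈ A
        · simp only [Pi.add_apply, Set.indicator_of_mem hω,
            Set.indicator_of_notMem (by simpa using hω : ω ∉ Aᶜ), add_zero]
          exact hAeq ω hω
        · simp only [Pi.add_apply, Set.indicator_of_notMem hω,
            Set.indicator_of_mem (by simpa using hω : ω ∈ Aᶜ), zero_add]
      have hzo := EE.zeroOne t htN.le (ξ t) (ξ' t) (hξ_meas t) (hξ_mem t)
        (hξ'_meas t htN) (hξ'_mem t htN) A hA_meas
      rw [hkey] at hzo
      filter_upwards [hzo, hL_rep t htN] with ω hω hrep hlt hcond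
      rcases hcond with h0 | hinc
      · omega
      · have hωA : ω ∈ A := by
          have h := runMax_succ L (t := 0) (u := t - 1) (by omega) ω
          rw [show t - 1 + 1 = t by omega] at h
          rw [h] at hinc
          by_contra hc
          simp only [hA, Set.mem_setOf_eq, not_lt] at hc
          rw [max_eq_right hc] at hinc
          exact lt_irrefl _ hinc
        rw [hY_def t htN]
        have h1 : EE.E t (ξ' t) ω = (A.indicator (EE.E t (ξ t))
            + Aᶜ.indicator (EE.E t (ξ' t))) ω := hω
        rw [Pi.add_apply, Set.indicator_of_mem hωA,
          Set.indicator_of_notMem (by simpa using hωA : ω ∉ Aᶜ), add_zero] at h1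
        rw [hrep, h1]
  refine ⟨fun t htN => hrm_meas 0 t (Nat.zero_le t) htN,
    fun t htN => hLp' 0 t (Nat.zero_le t) htN,
    fun ω s t hst htN => runMax_mono_right L ω hst,
    ?_, ?_, hdom, ae_all_iff.mpr hae, hY_N⟩
  · intro t htN
    rcases Nat.eq_or_lt_of_le htN with rfl | hlt
    · rw [hY_N]; exact hX_adapted t le_rfl
    · rw [hY_def t hlt]
      exact EE.adapted t htN (ξ t) (hξ_meas t) (hξ_mem t)
  · intro t htN
    rcases Nat.eq_or_lt_of_le htN with rfl | hlt
    · rw [hY_N]; exact hX_sqInt t le_rfl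
    · rw [hY_def t hlt]
      exact EE.sqInt t htN (ξ t) (hξ_meas t) (hξ_mem t)
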